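/- Let P and S be edge-weighted path complexes, fix p ∈ ℕ, and let P̄ = Δ(P_p ∪ P_{p+1}) and S̄ = Δ(S_p ∪ S_{p+1}) with the inherited edge weights. Suppose there are weak morphisms φ : P̄ → S̄ and ψ : S̄ → P̄ with weak one-step homotopy chains ψ∘φ = f_0 ∼₁ f_1 ∼₁ … ∼₁ f_m = id_{P̄} and φ∘ψ = g_0 ∼₁ g_1 ∼₁ … ∼₁ g_m = id_{S̄}. Set η = max{ max_{i=1,…,p+1} dis_i(φ), max_{i=1,…,p+1} dis_i(ψ), ½·max_{k=1,…,m} ( max_{l=0,…,p} [dis_l(f_{k−1}) + dis_{p−l}(f_k)] + cod(f_{k−1}, f_k) ), ½·max_{k=1,…,m} ( max_{l=0,…,p} [dis_l(g_{k−1}) + dis_{p−l}(g_k)] + cod(g_{k−1}, g_k) ) }. Then for every field K, the persistence modules δ ↦ H_p(P̄^δ) and δ ↦ H_p(S̄^δ) (indexed by δ ∈ [0, ∞), path sublevel filtration, structure maps induced by inclusions) are η-interleaved, via the maps induced on path homology by φ and ψ. -/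

import Mathlib

/-!
STATEMENT 18: Let P and S be edge-weighted path complexes, fix p ∈ ℕ, and let
P̄ = Δ(P_p ∪ P_{p+1}) and S̄ = Δ(S_p ∪ S_{p+1}) with the inherited edge weights.  Suppose
there are weak morphisms φ : P̄ → S̄ and ψ : S̄ → P̄ with weak one-step homotopy chains
ψ∘φ = f₀ ∼₁ … ∼₁ f_m = id_{P̄} and φ∘ψ = g₀ ∼₁ … ∼₁ g_m = id_{S̄}.  With
η = max{ max_{1≤i≤p+1} dis_i(φ), max_{1≤i≤p+1} dis_i(ψ),
½·max_{1≤k≤m}(max_{0≤l≤p}[dis_l(f_{k−1}) + dis_{p−l}(f_k)] + cod(f_{k−1}, f_k)),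
½·max_{1≤k≤m}(max_{0≤l≤p}[dis_l(g_{k−1}) + dis_{p−l}(g_k)] + cod(g_{k−1}, g_k)) },
for every field K the persistence modules δ ↦ H_p(P̄^δ) and δ ↦ H_p(S̄^δ) (δ ∈ [0,∞),
path sublevel filtration, structure maps induced by inclusions) are η-interleaved via the
maps induced on path homology by φ and ψ.

The interleaving is expressed at the level of cycles and boundaries, the structure maps
being the submodule inclusions (with which the induced chain maps automatically commute);
the composite conditions say that ψ_*(φ_* z) − z and φ_*(ψ_* z) − z are boundaries at
level δ + 2η.
-/

open scoped Classical

namespace PH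

/-- An elementary path (a list of vertices) is regular if no two consecutive
vertices coincide. -/
def Reg {V : Type} (l : List V) : Prop := l.Chain' (· ≠ ·)

/-- The regular boundary operator ∂ on the span of regular paths (all degrees at once,
with the convention that ∂ vanishes on 0-paths): on a basis path `p` of length ≥ 2 it is
the alternating sum of the vertex deletions, with non-regular terms replaced by 0. -/
noncomputable def dReg (K : Type) [Field K] (V : Type) :
    (List V →₀ K) →ₗ[K] (List V →₀ K) :=
  Finsupp.lsum K fun p => LinearMap.toSpanSingleton K (List V →₀ K)
    (if 2 ≤ p.length then
      ∑ q : Fin p.length, ((-1 : K) ^ (q : ℕ)) •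
        (if Reg (p.eraseIdx (q : ℕ)) then Finsupp.single (p.eraseIdx (q : ℕ)) (1 : K) else 0)
    else 0)

/-- The map induced on regular chains by a vertex map f:
`e_{i₀…iₙ} ↦ e_{f(i₀)…f(iₙ)}` if the image path is regular, and 0 otherwise. -/
noncomputable def find (K : Type) [Field K] {V W : Type} (f : V → W) :
    (List V →₀ K) →ₗ[K] (List W →₀ K) :=
  Finsupp.lsum K fun p => LinearMap.toSpanSingleton K (List W →₀ K)
    (if Reg (p.map f) then Finsupp.single (p.map f) (1 : K) else 0)

/-- `A_n(P)`: the span of the regular allowed n-paths (lists of n+1 vertices in P). -/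
def Asub (K : Type) [Field K] {V : Type} (P : Set (List V)) (n : ℕ) :
    Submodule K (List V →₀ K) :=
  Finsupp.supported K K {l | l ∈ P ∧ l.length = n + 1 ∧ Reg l}

/-- `Ω_n(P)`: the ∂-invariant allowed regular n-chains. -/
noncomputable def OmegaSub (K : Type) [Field K] {V : Type} (P : Set (List V)) (n : ℕ) :
    Submodule K (List V →₀ K) :=
  Asub K P n ⊓ Submodule.comap (dReg K V) (Asub K P (n - 1))

/-- The n-cycles of Ω_*(P). -/
noncomputable def Zsub (K : Type) [Field K] {V : Type} (P : Set (List V)) (n : ℕ) :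
    Submodule K (List V →₀ K) :=
  OmegaSub K P n ⊓ LinearMap.ker (dReg K V)

/-- The n-boundaries ∂Ω_{n+1}(P). -/
noncomputable def Bsub (K : Type) [Field K] {V : Type} (P : Set (List V)) (n : ℕ) :
    Submodule K (List V →₀ K) :=
  Submodule.map (dReg K V) (OmegaSub K P (n + 1))

/-- Path homology `H_n(P)`, realized as the image of the n-cycles in the quotient of the
ambient space by the n-boundaries (so `H_n(P) ≅ Z_n/(Z_n ∩ B_n) = Z_n/B_n`). -/
noncomputable def Hsm (K : Type) [Field K] {V : Type} (P : Set (List V)) (n : ℕ) :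
    Submodule K ((List V →₀ K) ⧸ Bsub K P n) :=
  Submodule.map (Bsub K P n).mkQ (Zsub K P n)

/-- A path complex on V: a set of non-empty elementary paths (lists) closed under
removing the last (`dropLast`) or the first (`tail`) vertex. -/
structure PathComplex (V : Type) where
  carrier : Set (List V)
  not_nil : ∀ p ∈ carrier, p ≠ []
  dropLast_mem : ∀ p ∈ carrier, 2 ≤ p.length → p.dropLast ∈ carrier
  tail_mem : ∀ p ∈ carrier, 2 ≤ p.length → p.tail ∈ carrier

end PH

namespace PH

/-- A weak morphism of path complexes: the image of every allowed path is allowed or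
non-regular. -/
def IsWeakMor {V W : Type} (P : Set (List V)) (S : Set (List W)) (f : V → W) : Prop :=
  ∀ p ∈ P, p.map f ∈ S ∨ ¬ Reg (p.map f)

/-- The paths of the cylinder path complex P × I on V ⊕ V. -/
def cylSet {V : Type} (P : Set (List V)) : Set (List (V ⊕ V)) :=
  {l | (∃ p ∈ P, l = p.map Sum.inl) ∨ (∃ p ∈ P, l = p.map Sum.inr) ∨
       (∃ p ∈ P, ∃ k : ℕ, k < p.length ∧
          l = (p.take (k + 1)).map Sum.inl ++ (p.drop k).map Sum.inr)}

/-- Weak one-step homotopy f ∼₁ g via a weak morphism from the cylinder restricting to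
f and g (in either order) on the two ends. -/
def WOneStep {V W : Type} (P : Set (List V)) (S : Set (List W)) (f g : V → W) : Prop :=
  ∃ F : V ⊕ V → W, IsWeakMor (cylSet P) S F ∧
    (((∀ v : V, F (Sum.inl v) = f v) ∧ (∀ v : V, F (Sum.inr v) = g v)) ∨
     ((∀ v : V, F (Sum.inl v) = g v) ∧ (∀ v : V, F (Sum.inr v) = f v)))

/-- Δ(A): the path complex generated by a set A of elementary paths (the closure of A
under front and back truncation, i.e. the non-empty infix subwords of paths of A). -/
def genPC {V : Type} (A : Set (List V)) : PathComplex V where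
  carrier := {q | q ≠ [] ∧ ∃ p ∈ A, q <:+: p}
  not_nil := fun p hp => hp.1
  dropLast_mem := by
    rintro p ⟨hne, q, hq, hinf⟩ hlen
    refine ⟨?_, q, hq, (List.dropLast_prefix p).isInfix.trans hinf⟩
    have : 0 < p.dropLast.length := by rw [List.length_dropLast]; omega
    exact List.ne_nil_of_length_pos this
  tail_mem := by
    rintro p ⟨hne, q, hq, hinf⟩ hlen
    refine ⟨?_, q, hq, (List.tail_suffix p).isInfix.trans hinf⟩
    have : 0 < p.tail.length := by rw [List.length_tail]; omega
    exact List.ne_nil_of_length_pos this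

/-- The length of a path with respect to edge weights w: the sum of the weights of its
consecutive edges (0 for a single vertex). -/
noncomputable def len {V : Type} (w : V → V → ℝ) (l : List V) : ℝ :=
  (List.zipWith w l l.tail).sum

/-- The path sublevel filtration P^δ of an edge-weighted path complex:
P^δ₀ = P₀ and, in positive degrees, the allowed paths of length ≤ δ. -/
def subPC {V : Type} (P : Set (List V)) (w : V → V → ℝ) (δ : ℝ) : Set (List V) :=
  {l | l ∈ P ∧ (l.length = 1 ∨ len w l ≤ δ)}

/-- dis_n(φ) for a weak morphism of edge-weighted path complexes (0 for n = 0, and the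
max over the empty set is 0). -/
noncomputable def disN {V W : Type} (P : Set (List V)) (wP : V → V → ℝ) (wS : W → W → ℝ)
    (φ : V → W) (n : ℕ) : ℝ :=
  sSup (insert 0 {d : ℝ | ∃ e ∈ P, e.length = n + 1 ∧ Reg (e.map φ) ∧
    d = |len wS (e.map φ) - len wP e|})

/-- cod(φ, ψ): the maximal weight of an allowed edge of the target of the form
φ(x)ψ(x) or ψ(x)φ(x) (0 if there is none). -/
noncomputable def codP {V W : Type} (S : Set (List W)) (wS : W → W → ℝ)
    (φ ψ : V → W) : ℝ :=
  sSup (insert 0 ({d : ℝ | ∃ x : V, [φ x, ψ x] ∈ S ∧ d = wS (φ x) (ψ x)} ∪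
                  {d : ℝ | ∃ x : V, [ψ x, φ x] ∈ S ∧ d = wS (ψ x) (φ x)}))

end PH

namespace PH




-- list lemmas
theorem reg_of_reg_map {V W : Type} (f : V → W) {l : List V} (h : Reg (l.map f)) : Reg l := by
  rw [Reg, List.Chain', List.isChain_map] at h
  exact h.imp fun {a b} hab e => hab (congrArg f e)

theorem map_eraseIdx' {V W : Type} (f : V → W) (l : List V) (i : ℕ) :
    (l.eraseIdx i).map f = (l.map f).eraseIdx i := by
  simp [List.eraseIdx_eq_take_drop_succ, List.map_take, List.map_drop]

theorem reg_cons_iff {V : Type} {x : V} {t : List V} :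
    Reg (x :: t) ↔ (∀ y ∈ t.head?, x ≠ y) ∧ Reg t := List.isChain_cons

theorem reg_tail {V : Type} {x : V} {t : List V} (h : Reg (x :: t)) : Reg t :=
  (reg_cons_iff.1 h).2

theorem not_reg_of_adj {V : Type} {l : List V} {j : ℕ} (hj : j + 1 < l.length)
    (h : l[j] = l[j+1]) : ¬ Reg l := by
  intro hr
  rw [Reg, List.Chain', List.isChain_iff_getElem] at hr
  exact hr j (by omega) (by simpa [List.get_eq_getElem] using h)

theorem eraseIdx_adj {V : Type} {l : List V} {j : ℕ} (hj : j + 1 < l.length)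
    (h : l[j] = l[j+1]) : l.eraseIdx j = l.eraseIdx (j+1) := by
  rw [List.eraseIdx_eq_take_drop_succ, List.eraseIdx_eq_take_drop_succ]
  have h1 : List.take (j+1) l = List.take j l ++ [l[j]] := by
    rw [List.take_succ]; simp [List.getElem?_eq_getElem (by omega : j < l.length)]
  have h2 : List.drop (j+1) l = l[j+1] :: List.drop (j+2) l := by
    rw [List.drop_eq_getElem_cons hj]
  rw [h1, h2, h]
  simp

theorem not_reg_eraseIdx_lt {V : Type} {l : List V} {j i : ℕ} (hj : j + 1 < l.length)
    (h : l[j] = l[j+1]) (hij : i < j) : ¬ Reg (l.eraseIdx i) := by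
  obtain ⟨j', rfl⟩ : ∃ j', j = j' + 1 := ⟨j - 1, by omega⟩
  have hlen : (l.eraseIdx i).length = l.length - 1 := by
    rw [List.length_eraseIdx]; simp only [if_pos (by omega : i < l.length)]
  have hb : j' + 1 < (l.eraseIdx i).length := by omega
  refine not_reg_of_adj hb ?_
  rw [List.getElem_eraseIdx (by omega), List.getElem_eraseIdx (by omega)]
  rw [dif_neg (by omega), dif_neg (by omega)]
  exact h

theorem not_reg_eraseIdx_gt {V : Type} {l : List V} {j i : ℕ} (hj : j + 1 < l.length)
    (h : l[j] = l[j+1]) (hij : j + 1 < i) : ¬ Reg (l.eraseIdx i) := by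
  rcases le_or_gt l.length i with hi | hi
  · rw [List.eraseIdx_of_length_le hi]
    exact not_reg_of_adj hj h
  have hlen : (l.eraseIdx i).length = l.length - 1 := by
    rw [List.length_eraseIdx]; simp only [if_pos hi]
  have hb : j + 1 < (l.eraseIdx i).length := by omega
  refine not_reg_of_adj hb ?_
  rw [List.getElem_eraseIdx (by omega), List.getElem_eraseIdx (by omega)]
  rw [dif_pos (by omega), dif_pos (by omega)]
  exact h

theorem not_reg_iff {V : Type} {l : List V} :
    ¬ Reg l ↔ ∃ j : ℕ, ∃ h : j + 1 < l.length, l[j]'(Nat.lt_of_succ_lt h) = l[j+1]'h := by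
  constructor
  · intro h
    by_contra hc
    push_neg at hc
    apply h
    rw [Reg, List.Chain', List.isChain_iff_getElem]
    intro i hi
    have := hc i (by omega)
    simpa [List.get_eq_getElem] using this
  · rintro ⟨j, hj, h⟩
    exact not_reg_of_adj hj h

@[simp] theorem len_nil {V : Type} (w : V → V → ℝ) : len w ([] : List V) = 0 := rfl
@[simp] theorem len_single {V : Type} (w : V → V → ℝ) (a : V) : len w [a] = 0 := rfl

theorem len_cons₂ {V : Type} (w : V → V → ℝ) (a b : V) (t : List V) :
    len w (a :: b :: t) = w a b + len w (b :: t) := by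
  simp [len]

theorem len_of_length_one {V : Type} (w : V → V → ℝ) {l : List V} (h : l.length = 1) :
    len w l = 0 := by
  obtain ⟨a, rfl⟩ := List.length_eq_one_iff.1 h
  rfl

theorem len_cons_ne {V : Type} (w : V → V → ℝ) (a : V) {m : List V} (hm : m ≠ []) :
    len w (a :: m) = w a (m.head hm) + len w m := by
  cases m with
  | nil => exact absurd rfl hm
  | cons b t => simp [len_cons₂]

theorem len_take_drop {V : Type} (w : V → V → ℝ) :
    ∀ (k : ℕ) (l : List V), k < l.length →
      len w (l.take (k+1)) + len w (l.drop k) = len w l := by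
  intro k
  induction k with
  | zero =>
    intro l hl
    cases l with
    | nil => simp at hl
    | cons a t => simp
  | succ k ih =>
    intro l hl
    cases l with
    | nil => simp at hl
    | cons a t =>
      have ht : k < t.length := by simpa using hl
      cases t with
      | nil => simp at ht
      | cons b t' =>
        have h1 : (a :: b :: t').take (k+2) = a :: (b :: t').take (k+1) := rfl
        have h2 : (a :: b :: t').drop (k+1) = (b :: t').drop k := rfl
        rw [h1, h2]
        have h3 : (b :: t').take (k+1) = b :: t'.take k := rfl
        rw [h3, len_cons₂, ← h3, add_assoc, ih (b :: t') ht, len_cons₂]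

theorem len_append_cons {V : Type} (w : V → V → ℝ) :
    ∀ (x : List V) (a : V) (y : List V),
      len w (x ++ a :: y) = len w (x ++ [a]) + len w (a :: y) := by
  intro x
  induction x with
  | nil => intro a y; simp
  | cons c x' ih =>
    intro a y
    have hne1 : x' ++ a :: y ≠ [] := by simp
    have hne2 : x' ++ [a] ≠ [] := by simp
    have hh : (x' ++ a :: y).head hne1 = (x' ++ [a]).head hne2 := by
      cases x' <;> rfl
    rw [List.cons_append, List.cons_append, len_cons_ne w c hne1, len_cons_ne w c hne2,
      ih a y, hh]
    ring

def prismL {V : Type} (l : List V) (k : ℕ) : List (V ⊕ V) :=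
  (l.take (k+1)).map Sum.inl ++ (l.drop k).map Sum.inr

theorem prismL_length {V : Type} {l : List V} {k : ℕ} (hk : k < l.length) :
    (prismL l k).length = l.length + 1 := by
  simp only [prismL, List.length_append, List.length_map, List.length_take, List.length_drop]
  omega

theorem prismL_cons_zero {V : Type} (a : V) (s : List V) :
    prismL (a :: s) 0 = Sum.inl a :: Sum.inr a :: s.map Sum.inr := rfl

theorem prismL_cons_succ {V : Type} (a : V) (s : List V) (k : ℕ) :
    prismL (a :: s) (k+1) = Sum.inl a :: prismL s k := rfl

theorem prismL_getElem_left {V : Type} {l : List V} {k t : ℕ} (hk : k < l.length)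
    (ht : t ≤ k) : ∀ (h : t < (prismL l k).length), (prismL l k)[t] = Sum.inl (l[t]'(by omega)) := by
  intro h
  have h1 : t < ((l.take (k+1)).map (Sum.inl : V → V ⊕ V)).length := by
    simp [List.length_take]; omega
  simp only [prismL]
  rw [List.getElem_append_left h1, List.getElem_map, List.getElem_take]

theorem prismL_getElem_right {V : Type} {l : List V} {k t : ℕ} (hk : k < l.length)
    (ht : k + 1 ≤ t) (ht2 : t ≤ l.length) :
    ∀ (h : t < (prismL l k).length), (prismL l k)[t] = Sum.inr (l[t-1]'(by omega)) := by
  intro h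
  have hlt : ((l.take (k+1)).map (Sum.inl : V → V ⊕ V)).length ≤ t := by
    simp [List.length_take]; omega
  simp only [prismL]
  rw [List.getElem_append_right hlt, List.getElem_map, List.getElem_drop]
  have hidx : k + (t - ((l.take (k+1)).map (Sum.inl : V → V ⊕ V)).length) = t - 1 := by
    simp only [List.length_map, List.length_take]; omega
  simp only [hidx]

theorem not_reg_prismL {V : Type} {l : List V} {k : ℕ} (hk : k < l.length) (h : ¬ Reg l) :
    ¬ Reg (prismL l k) := by
  rw [not_reg_iff] at h ⊢
  obtain ⟨j, hj, hadj⟩ := h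
  have hplen : (prismL l k).length = l.length + 1 := prismL_length hk
  rcases le_or_gt (j+1) k with hcase | hcase
  · refine ⟨j, by omega, ?_⟩
    rw [prismL_getElem_left hk (by omega), prismL_getElem_left hk (by omega)]
    exact congrArg _ hadj
  · refine ⟨j + 1, by omega, ?_⟩
    rw [prismL_getElem_right hk (by omega) (by omega), prismL_getElem_right hk (by omega) (by omega)]
    exact congrArg _ (by simpa using hadj)
-- ============ operator calculus ============
noncomputable def guard (K : Type) [Field K] {V : Type} (l : List V) : List V →₀ K :=
  if Reg l then Finsupp.single l 1 else 0

noncomputable def dRaw (K : Type) [Field K] (V : Type) :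
    (List V →₀ K) →ₗ[K] (List V →₀ K) :=
  Finsupp.lsum K fun p => LinearMap.toSpanSingleton K (List V →₀ K)
    (if 2 ≤ p.length then
      ∑ q ∈ Finset.range p.length, ((-1 : K) ^ q) • Finsupp.single (p.eraseIdx q) (1 : K)
    else 0)

noncomputable def pr (K : Type) [Field K] (V : Type) :
    (List V →₀ K) →ₗ[K] (List V →₀ K) :=
  Finsupp.lsum K fun p => LinearMap.toSpanSingleton K (List V →₀ K) (guard K p)

noncomputable def mapd (K : Type) [Field K] {V W : Type} (f : V → W) :
    (List V →₀ K) →ₗ[K] (List W →₀ K) :=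
  Finsupp.lmapDomain K K (List.map f)

noncomputable def consd (K : Type) [Field K] {V : Type} (x : V) :
    (List V →₀ K) →ₗ[K] (List V →₀ K) :=
  Finsupp.lmapDomain K K (x :: ·)

noncomputable def craw (K : Type) [Field K] (V : Type) :
    (List V →₀ K) →ₗ[K] (List (V ⊕ V) →₀ K) :=
  Finsupp.lsum K fun l => LinearMap.toSpanSingleton K (List (V ⊕ V) →₀ K)
    (∑ k ∈ Finset.range l.length, ((-1 : K) ^ k) • Finsupp.single (prismL l k) (1 : K))

variable {K : Type} [Field K]

theorem lhom_ext1 {α : Type} {N : Type} [AddCommGroup N] [Module K N]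
    {φ ψ : (α →₀ K) →ₗ[K] N} (h : ∀ a, φ (Finsupp.single a 1) = ψ (Finsupp.single a 1)) :
    φ = ψ := by
  refine Finsupp.lhom_ext fun a b => ?_
  have hb : (Finsupp.single a b : α →₀ K) = b • Finsupp.single a 1 := by
    rw [Finsupp.smul_single, smul_eq_mul, mul_one]
  rw [hb, map_smul, map_smul, h]

theorem dRaw_single1 {V : Type} (l : List V) :
    dRaw K V (Finsupp.single l 1) =
      (if 2 ≤ l.length then
        ∑ q ∈ Finset.range l.length, ((-1 : K) ^ q) • Finsupp.single (l.eraseIdx q) (1 : K)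
      else 0) := by
  rw [dRaw, Finsupp.lsum_single, LinearMap.toSpanSingleton_apply, one_smul]

theorem pr_single1 {V : Type} (l : List V) :
    pr K V (Finsupp.single l 1) = guard K l := by
  rw [pr, Finsupp.lsum_single, LinearMap.toSpanSingleton_apply, one_smul]

theorem find_single1 {V W : Type} (f : V → W) (l : List V) :
    find K f (Finsupp.single l 1) =
      (if Reg (l.map f) then Finsupp.single (l.map f) (1 : K) else 0) := by
  rw [find, Finsupp.lsum_single, LinearMap.toSpanSingleton_apply, one_smul]

theorem dReg_single1 {V : Type} (l : List V) :
    dReg K V (Finsupp.single l 1) =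
      (if 2 ≤ l.length then
        ∑ q : Fin l.length, ((-1 : K) ^ (q : ℕ)) •
          (if Reg (l.eraseIdx (q : ℕ)) then Finsupp.single (l.eraseIdx (q : ℕ)) (1 : K) else 0)
      else 0) := by
  rw [dReg, Finsupp.lsum_single, LinearMap.toSpanSingleton_apply, one_smul]

theorem craw_single1 {V : Type} (l : List V) :
    craw K V (Finsupp.single l 1) =
      ∑ k ∈ Finset.range l.length, ((-1 : K) ^ k) • Finsupp.single (prismL l k) (1 : K) := by
  rw [craw, Finsupp.lsum_single, LinearMap.toSpanSingleton_apply, one_smul]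

theorem mapd_single {V W : Type} (f : V → W) (l : List V) (c : K) :
    mapd K f (Finsupp.single l c) = Finsupp.single (l.map f) c := by
  rw [mapd, Finsupp.lmapDomain_apply, Finsupp.mapDomain_single]

theorem consd_single {V : Type} (x : V) (l : List V) (c : K) :
    consd K x (Finsupp.single l c) = Finsupp.single (x :: l) c := by
  rw [consd, Finsupp.lmapDomain_apply, Finsupp.mapDomain_single]

theorem guard_of_reg {V : Type} {l : List V} (h : Reg l) :
    guard K l = Finsupp.single l (1 : K) := by rw [guard, if_pos h]

theorem guard_of_not_reg {V : Type} {l : List V} (h : ¬ Reg l) :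
    guard K l = (0 : List V →₀ K) := by rw [guard, if_neg h]

-- dReg = pr ∘ dRaw
theorem dReg_eq (V : Type) : dReg K V = (pr K V).comp (dRaw K V) := by
  refine lhom_ext1 fun l => ?_
  rw [LinearMap.comp_apply, dReg_single1, dRaw_single1]
  split
  · rw [map_sum]
    rw [Fin.sum_univ_eq_sum_range
      (fun q => ((-1 : K) ^ q) • (if Reg (l.eraseIdx q) then Finsupp.single (l.eraseIdx q) (1:K) else 0))]
    refine Finset.sum_congr rfl fun q _ => ?_
    rw [map_smul, pr_single1, guard]
  · rw [map_zero]

-- find = pr ∘ mapd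
theorem find_eq {V W : Type} (f : V → W) : find K f = (pr K W).comp (mapd K f) := by
  refine lhom_ext1 fun l => ?_
  rw [LinearMap.comp_apply, find_single1, mapd_single, pr_single1, guard]

theorem pr_mapd_pr {V W : Type} (f : V → W) (z : List V →₀ K) :
    pr K W (mapd K f (pr K V z)) = pr K W (mapd K f z) := by
  have : (pr K W).comp ((mapd K f).comp (pr K V)) = (pr K W).comp (mapd K f) := by
    refine lhom_ext1 fun l => ?_
    simp only [LinearMap.comp_apply, pr_single1, guard]
    split
    · rw [mapd_single, pr_single1, guard]
    · rw [map_zero, map_zero, mapd_single, pr_single1,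
        guard_of_not_reg (fun hr => ‹¬ Reg l› (reg_of_reg_map f hr))]
  exact LinearMap.congr_fun this z

theorem mapd_mapd {V W X : Type} (f : V → W) (g : W → X) (z : List V →₀ K) :
    mapd K g (mapd K f z) = mapd K (g ∘ f) z := by
  have : (mapd K g).comp (mapd K f) = (mapd K (g ∘ f) : (List V →₀ K) →ₗ[K] _) := by
    refine lhom_ext1 fun l => ?_
    simp only [LinearMap.comp_apply, mapd_single, List.map_map]
  exact LinearMap.congr_fun this z

theorem dRaw_mapd {V W : Type} (f : V → W) (z : List V →₀ K) :
    dRaw K W (mapd K f z) = mapd K f (dRaw K V z) := by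
  have : (dRaw K W).comp (mapd K f) = (mapd K f).comp (dRaw K V) := by
    refine lhom_ext1 fun l => ?_
    simp only [LinearMap.comp_apply, mapd_single, dRaw_single1, List.length_map]
    split
    · rw [map_sum]
      refine Finset.sum_congr rfl fun q _ => ?_
      rw [map_smul, mapd_single, map_eraseIdx']
    · rw [map_zero]
  exact LinearMap.congr_fun this z

theorem mapd_consd {V W : Type} (f : V → W) (a : V) (z : List V →₀ K) :
    mapd K f (consd K a z) = consd K (f a) (mapd K f z) := by
  have : (mapd K f).comp (consd K a) = (consd K (f a)).comp (mapd K f) := by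
    refine lhom_ext1 fun l => ?_
    simp only [LinearMap.comp_apply, mapd_single, consd_single, List.map_cons]
  exact LinearMap.congr_fun this z

theorem pr_consd_pr {V : Type} (x : V) (z : List V →₀ K) :
    pr K V (consd K x (pr K V z)) = pr K V (consd K x z) := by
  have : (pr K V).comp ((consd K x).comp (pr K V)) = (pr K V).comp (consd K x) := by
    refine lhom_ext1 fun l => ?_
    simp only [LinearMap.comp_apply, pr_single1]
    rw [guard]
    split
    · rw [consd_single, pr_single1]
    · rw [map_zero, map_zero, consd_single, pr_single1,
        guard_of_not_reg (fun hr => ‹¬ Reg l› (reg_tail hr))]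
  exact LinearMap.congr_fun this z

theorem pr_consd_consd {V : Type} (x : V) (z : List V →₀ K) :
    pr K V (consd K x (consd K x z)) = 0 := by
  have : (pr K V).comp ((consd K x).comp (consd K x)) = (0 : (List V →₀ K) →ₗ[K] _) := by
    refine lhom_ext1 fun l => ?_
    simp only [LinearMap.comp_apply, consd_single, pr_single1, LinearMap.zero_apply]
    refine guard_of_not_reg fun hr => ?_
    exact (reg_cons_iff.1 hr).1 x rfl rfl
  exact LinearMap.congr_fun this z
-- U1 : expansion of dRaw on a cons
theorem dRaw_cons {V : Type} (x : V) (t : List V) (ht : t ≠ []) :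
    dRaw K V (Finsupp.single (x :: t) 1) =
      Finsupp.single t 1 - consd K x (dRaw K V (Finsupp.single t 1))
        - (if t.length = 1 then Finsupp.single [x] (1 : K) else 0) := by
  have hlen : 1 ≤ t.length := List.length_pos_iff.2 ht
  rw [dRaw_single1]
  rw [if_pos (by simp; omega : 2 ≤ (x :: t).length)]
  simp only [List.length_cons]
  rw [Finset.sum_range_succ']
  simp only [List.eraseIdx_cons_succ, List.eraseIdx_cons_zero, pow_succ, mul_neg_one,
    neg_smul, pow_zero, one_smul]
  rw [Finset.sum_neg_distrib]
  rcases eq_or_lt_of_le hlen with h1 | h2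
  · -- t.length = 1
    obtain ⟨b, rfl⟩ := List.length_eq_one_iff.1 h1.symm
    rw [dRaw_single1, if_neg (by simp)]
    simp [Finset.sum_range_succ]
    abel
  · -- 2 ≤ t.length
    rw [dRaw_single1, if_pos (by omega), if_neg (by omega), map_sum]
    simp only [map_smul, consd_single]
    abel

-- expansion of craw on a cons
theorem craw_cons {V : Type} (a : V) (s : List V) :
    craw K V (Finsupp.single (a :: s) 1) =
      Finsupp.single (Sum.inl a :: Sum.inr a :: s.map Sum.inr) (1 : K)
        - consd K (Sum.inl a) (craw K V (Finsupp.single s 1)) := by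
  rw [craw_single1]
  simp only [List.length_cons]
  rw [Finset.sum_range_succ']
  simp only [prismL_cons_succ, prismL_cons_zero, pow_succ, mul_neg_one, neg_smul,
    pow_zero, one_smul]
  rw [Finset.sum_neg_distrib, craw_single1, map_sum]
  simp only [map_smul, consd_single]
  abel

theorem pr_dRaw_single_not_reg {V : Type} :
    ∀ (l : List V), ¬ Reg l → pr K V (dRaw K V (Finsupp.single l 1)) = 0 := by
  intro l
  induction l with
  | nil => intro h; exact absurd List.isChain_nil h
  | cons x t ih =>
    intro h
    cases t with
    | nil => exact absurd (List.isChain_singleton x) h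
    | cons b t' =>
      rw [dRaw_cons x (b :: t') (by simp), map_sub, map_sub]
      by_cases hrt : Reg (b :: t')
      · -- then x = b
        have hx : x = b := by
          by_contra hne
          exact h (reg_cons_iff.2 ⟨fun y hy => by simp at hy; rw [← hy]; exact hne, hrt⟩)
        subst hx
        cases t' with
        | nil =>
          have hd : dRaw K V (Finsupp.single [x] (1:K)) = 0 := by
            rw [dRaw_single1, if_neg (by simp)]
          rw [hd, map_zero, map_zero, if_pos (show ([x] : List V).length = 1 from rfl)]
          simp
        | cons c t'' =>
          rw [dRaw_cons x (c :: t'') (by simp), map_sub, map_sub, map_sub, map_sub]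
          rw [pr_consd_consd]
          have h1 : pr K V (consd K x (Finsupp.single (c :: t'') 1)) =
              Finsupp.single (x :: c :: t'') (1 : K) := by
            rw [consd_single, pr_single1, guard_of_reg hrt]
          have h2 : pr K V (consd K x
              (if (c :: t'').length = 1 then Finsupp.single [x] (1:K) else 0)) = 0 := by
            split
            · rw [consd_single, pr_single1]
              exact guard_of_not_reg (fun hr => (reg_cons_iff.1 hr).1 x rfl rfl)
            · rw [map_zero, map_zero]
          rw [h1, h2, if_neg (by simp), pr_single1, guard_of_reg hrt]
          simp
      · -- irregular tail: use ih
        have h3 : pr K V (consd K x (dRaw K V (Finsupp.single (b :: t') 1))) = 0 := by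
          rw [← pr_consd_pr, ih hrt, map_zero, map_zero]
        have h4 : ¬ (b :: t').length = 1 := by
          intro hc
          obtain ⟨u, hu⟩ := List.length_eq_one_iff.1 hc
          rw [hu] at hrt
          exact hrt (List.isChain_singleton u)
        rw [h3, if_neg h4, map_zero, pr_single1, guard_of_not_reg hrt]
        simp

theorem pr_dRaw_pr {V : Type} (z : List V →₀ K) :
    pr K V (dRaw K V (pr K V z)) = pr K V (dRaw K V z) := by
  have : (pr K V).comp ((dRaw K V).comp (pr K V)) = (pr K V).comp (dRaw K V) := by
    refine lhom_ext1 fun l => ?_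
    simp only [LinearMap.comp_apply, pr_single1]
    rw [guard]
    split
    · rfl
    · rw [map_zero, map_zero, pr_dRaw_single_not_reg l ‹¬ Reg l›]
  exact LinearMap.congr_fun this z

-- the prism expansion lemma (dRaw of consd applied to craw output)
theorem dRaw_consd_craw {V : Type} (x : V ⊕ V) {m : List V} (hm : m ≠ []) :
    dRaw K (V ⊕ V) (consd K x (craw K V (Finsupp.single m 1))) =
      craw K V (Finsupp.single m 1)
        - consd K x (dRaw K (V ⊕ V) (craw K V (Finsupp.single m 1))) := by
  have hlen : 1 ≤ m.length := List.length_pos_iff.2 hm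
  rw [craw_single1, map_sum, map_sum, map_sum, map_sum]
  rw [← Finset.sum_sub_distrib]
  refine Finset.sum_congr rfl fun k hk => ?_
  have hk' : k < m.length := Finset.mem_range.1 hk
  have hne : prismL m k ≠ [] := by
    have := prismL_length (l := m) hk'
    intro hc; rw [hc] at this; simp at this
  rw [map_smul, map_smul, map_smul, map_smul, ← smul_sub, consd_single,
    dRaw_cons x (prismL m k) hne,
    if_neg (by rw [prismL_length hk']; omega)]
  abel_nf

-- The prism identity
theorem prism_identity {V : Type} :
    ∀ (l : List V), dRaw K (V ⊕ V) (craw K V (Finsupp.single l 1)) =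
      Finsupp.single (l.map Sum.inr) (1 : K) - Finsupp.single (l.map Sum.inl) (1 : K)
        - craw K V (dRaw K V (Finsupp.single l 1)) := by
  intro l
  induction l with
  | nil =>
    rw [craw_single1, dRaw_single1]
    simp
  | cons a m ih =>
    cases m with
    | nil =>
      have hc : craw K V (Finsupp.single [a] 1) =
          Finsupp.single [Sum.inl a, Sum.inr a] (1 : K) := by
        rw [craw_single1]; simp [prismL]
      have hd : dRaw K V (Finsupp.single [a] (1:K)) = 0 := by
        rw [dRaw_single1, if_neg (by simp)]
      have hdd : dRaw K (V ⊕ V) (Finsupp.single [Sum.inl a, Sum.inr a] (1:K)) =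
          Finsupp.single [Sum.inr a] 1 - Finsupp.single [Sum.inl a] 1 := by
        rw [dRaw_single1, if_pos (by simp)]
        simp [Finset.sum_range_succ]
        abel
      rw [hc, hdd, hd, map_zero, sub_zero]
      rfl
    | cons b m' =>
      have hmne : (b :: m') ≠ [] := by simp
      -- rename tail to m for readability
      generalize hm : b :: m' = m at *
      have h1 := craw_cons (K := K) a m
      have h5 : dRaw K V (Finsupp.single (a :: m) 1) =
          Finsupp.single m 1 - consd K a (dRaw K V (Finsupp.single m 1))
            - (if m.length = 1 then Finsupp.single [a] 1 else 0) :=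
        dRaw_cons a m hmne
      have h2 : dRaw K (V ⊕ V) (Finsupp.single (Sum.inl a :: Sum.inr a :: m.map Sum.inr) 1) =
          Finsupp.single (Sum.inr a :: m.map Sum.inr) 1
            - consd K (Sum.inl a) (mapd K Sum.inr (dRaw K V (Finsupp.single (a :: m) 1))) := by
        have e1 : (Sum.inr a :: m.map Sum.inr : List (V ⊕ V)) = (a :: m).map Sum.inr := rfl
        rw [dRaw_cons (Sum.inl a) (Sum.inr a :: m.map Sum.inr) (by simp),
          if_neg (by simp [hmne]), sub_zero, e1]
        congr 1
        congr 1
        rw [← mapd_single, dRaw_mapd]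
      have h3 := dRaw_consd_craw (K := K) (Sum.inl a) hmne
      have hU3 : ∀ y : List V →₀ K, craw K V (consd K a y) =
          consd K (Sum.inl a) (consd K (Sum.inr a) (mapd K Sum.inr y))
            - consd K (Sum.inl a) (craw K V y) := by
        intro y
        have : (craw K V).comp (consd K a) =
            (consd K (Sum.inl a)).comp ((consd K (Sum.inr a)).comp (mapd K Sum.inr))
              - (consd K (Sum.inl a)).comp (craw K V) := by
          refine lhom_ext1 fun s => ?_
          simp only [LinearMap.sub_apply, LinearMap.comp_apply, consd_single, mapd_single]
          rw [craw_cons]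
        exact LinearMap.congr_fun this y
      have h8 : consd K (Sum.inl a) (mapd K Sum.inr
            ((if m.length = 1 then Finsupp.single [a] 1 else 0) : List V →₀ K)) =
          craw K V ((if m.length = 1 then Finsupp.single [a] 1 else 0) : List V →₀ K) := by
        split
        · rw [mapd_single, consd_single, craw_single1]
          simp [prismL, Finset.sum_range_succ]
        · rw [map_zero, map_zero, map_zero]
      have h7 : mapd K Sum.inr (dRaw K V (Finsupp.single (a :: m) 1)) =
          Finsupp.single (m.map (Sum.inr : V → V ⊕ V)) 1
            - consd K (Sum.inr a) (mapd K Sum.inr (dRaw K V (Finsupp.single m 1)))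
            - mapd K Sum.inr ((if m.length = 1 then Finsupp.single [a] 1 else 0) : List V →₀ K) := by
        rw [h5, map_sub, map_sub, mapd_single, mapd_consd]
      have h6 : craw K V (dRaw K V (Finsupp.single (a :: m) 1)) =
          craw K V (Finsupp.single m 1)
            - (consd K (Sum.inl a) (consd K (Sum.inr a)
                  (mapd K Sum.inr (dRaw K V (Finsupp.single m 1))))
                - consd K (Sum.inl a) (craw K V (dRaw K V (Finsupp.single m 1))))
            - craw K V ((if m.length = 1 then Finsupp.single [a] 1 else 0) : List V →₀ K) := by
        rw [h5, map_sub, map_sub, hU3]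
      rw [h1, map_sub, h2, h3, h7, h6, ih]
      simp only [map_sub, consd_single, List.map_cons]
      rw [h8]
      abel
theorem pr_mapd_craw_pr {V W : Type} (F : V ⊕ V → W) (z : List V →₀ K) :
    pr K W (mapd K F (craw K V (pr K V z))) = pr K W (mapd K F (craw K V z)) := by
  have : (pr K W).comp ((mapd K F).comp ((craw K V).comp (pr K V)))
      = (pr K W).comp ((mapd K F).comp (craw K V)) := by
    refine lhom_ext1 fun l => ?_
    simp only [LinearMap.comp_apply, pr_single1]
    rw [guard]
    split
    · rfl
    · rw [map_zero, map_zero, map_zero, craw_single1, map_sum, map_sum]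
      refine (Finset.sum_eq_zero fun k hk => ?_).symm
      rw [map_smul, map_smul, mapd_single, pr_single1,
        guard_of_not_reg (fun hr =>
          not_reg_prismL (Finset.mem_range.1 hk) ‹¬ Reg l› (reg_of_reg_map F hr)),
        smul_zero]
  exact LinearMap.congr_fun this z

theorem dReg_find {V W : Type} (f : V → W) (z : List V →₀ K) :
    dReg K W (find K f z) = find K f (dReg K V z) := by
  simp only [dReg_eq, find_eq, LinearMap.comp_apply]
  rw [pr_dRaw_pr, dRaw_mapd, pr_mapd_pr]

theorem find_find {U V W : Type} (f : U → V) (g : V → W) (z : List U →₀ K) :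
    find K g (find K f z) = find K (g ∘ f) z := by
  rw [find_eq, find_eq, find_eq]
  simp only [LinearMap.comp_apply]
  rw [pr_mapd_pr, mapd_mapd]

theorem find_id_eq_pr (V : Type) : find K (id : V → V) = pr K V := by
  refine lhom_ext1 fun l => ?_
  rw [find_single1, pr_single1, guard, List.map_id]

theorem pr_of_regular {V : Type} {z : List V →₀ K} (h : ∀ l ∈ z.support, Reg l) :
    pr K V z = z := by
  have h1 : pr K V z = z.sum fun l c => c • guard K l := by
    rw [pr, Finsupp.lsum_apply]
    rfl
  rw [h1]
  have h2 : (z.sum fun l c => c • guard K l) = z.sum fun l c => Finsupp.single l c := by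
    refine Finset.sum_congr rfl fun l hl => ?_
    show (z l) • guard K l = Finsupp.single l (z l)
    rw [guard_of_reg (h l hl), Finsupp.smul_single, smul_eq_mul, mul_one]
  rw [h2, Finsupp.sum_single]

theorem homotopy_step {V W : Type} (F : V ⊕ V → W) (z : List V →₀ K) :
    dReg K W (find K F (craw K V z)) =
      find K (F ∘ Sum.inr) z - find K (F ∘ Sum.inl) z
        - find K F (craw K V (dReg K V z)) := by
  have hPI : ∀ y : List V →₀ K, dRaw K (V ⊕ V) (craw K V y)
      = mapd K Sum.inr y - mapd K Sum.inl y - craw K V (dRaw K V y) := by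
    intro y
    have : (dRaw K (V ⊕ V)).comp (craw K V)
        = (mapd K Sum.inr : (List V →₀ K) →ₗ[K] _) - mapd K Sum.inl
            - (craw K V).comp (dRaw K V) := by
      refine lhom_ext1 fun l => ?_
      simp only [LinearMap.comp_apply, LinearMap.sub_apply]
      rw [prism_identity, mapd_single, mapd_single]
    exact LinearMap.congr_fun this y
  simp only [dReg_eq, find_eq, LinearMap.comp_apply]
  rw [pr_dRaw_pr, dRaw_mapd, hPI, map_sub, map_sub, map_sub, map_sub,
    mapd_mapd, mapd_mapd, pr_mapd_craw_pr]
-- ================= membership machinery =================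
theorem finsuppSum_mem' {V W : Type} (z : List V →₀ K) (T : List V → K → (List W →₀ K))
    (M : Submodule K (List W →₀ K)) (h : ∀ l ∈ z.support, T l (z l) ∈ M) :
    z.sum T ∈ M :=
  Submodule.sum_mem M fun a ha => h a ha

theorem find_apply {V W : Type} (f : V → W) (z : List V →₀ K) :
    find K f z = z.sum fun l c =>
      c • (if Reg (l.map f) then Finsupp.single (l.map f) (1 : K) else 0) := by
  rw [find, Finsupp.lsum_apply]
  rfl

theorem find_craw_apply {V W : Type} (F : V ⊕ V → W) (z : List V →₀ K) :
    find K F (craw K V z) = z.sum fun l c =>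
      c • ∑ k ∈ Finset.range l.length, ((-1 : K) ^ k) •
        (if Reg ((prismL l k).map F) then Finsupp.single ((prismL l k).map F) (1 : K) else 0) := by
  have h1 : craw K V z = z.sum fun l c =>
      c • ∑ k ∈ Finset.range l.length, ((-1 : K) ^ k) • Finsupp.single (prismL l k) (1:K) := by
    rw [craw, Finsupp.lsum_apply]
    rfl
  rw [h1, map_finsuppSum]
  refine Finset.sum_congr rfl fun l _ => ?_
  show find K F ((z l) • ∑ k ∈ Finset.range l.length,
      ((-1 : K) ^ k) • Finsupp.single (prismL l k) (1:K)) = _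
  rw [map_smul, map_sum]
  congr 1
  refine Finset.sum_congr rfl fun k _ => ?_
  rw [map_smul, find_single1]

theorem subPC_mono {V : Type} (P : Set (List V)) (w : V → V → ℝ) {δ δ' : ℝ} (h : δ ≤ δ') :
    subPC P w δ ⊆ subPC P w δ' := by
  rintro l ⟨hP, hc⟩
  exact ⟨hP, hc.imp id fun hl => le_trans hl h⟩

theorem Asub_mono {V : Type} {P Q : Set (List V)} (h : P ⊆ Q) (n : ℕ) :
    Asub K P n ≤ Asub K Q n :=
  Finsupp.supported_mono fun l hl => ⟨h hl.1, hl.2⟩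

theorem Omega_mono {V : Type} {P Q : Set (List V)} (h : P ⊆ Q) (n : ℕ) :
    OmegaSub K P n ≤ OmegaSub K Q n :=
  inf_le_inf (Asub_mono h n) (Submodule.comap_mono (Asub_mono h _))

theorem Zsub_mono {V : Type} {P Q : Set (List V)} (h : P ⊆ Q) (n : ℕ) :
    Zsub K P n ≤ Zsub K Q n :=
  inf_le_inf (Omega_mono h n) le_rfl

theorem Bsub_mono {V : Type} {P Q : Set (List V)} (h : P ⊆ Q) (n : ℕ) :
    Bsub K P n ≤ Bsub K Q n :=
  Submodule.map_mono (Omega_mono h _)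

theorem len_le_of_subPC {V : Type} {P : Set (List V)} {w : V → V → ℝ} {δ : ℝ} (hδ : 0 ≤ δ)
    {l : List V} (hl : l ∈ subPC P w δ) : len w l ≤ δ := by
  rcases hl.2 with h1 | h2
  · rw [len_of_length_one w h1]; exact hδ
  · exact h2

-- sSup helpers
theorem sSup_insert0_nonneg (s : Set ℝ) : 0 ≤ sSup (insert 0 s) := by
  by_cases hb : BddAbove (insert 0 s)
  · exact le_csSup hb (Set.mem_insert 0 s)
  · rw [Real.sSup_of_not_bddAbove hb]

theorem le_sSup_insert0 {s : Set ℝ} (h : s.Finite) {d : ℝ} (hd : d ∈ s) :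
    d ≤ sSup (insert 0 s) :=
  le_csSup ((h.insert 0).bddAbove) (Set.mem_insert_iff.2 (Or.inr hd))

theorem finite_of_image {α : Type} {s : Set ℝ} {t : Set α} (ht : t.Finite) (F : α → ℝ)
    (h : ∀ d ∈ s, ∃ a ∈ t, d = F a) : s.Finite := by
  refine Set.Finite.subset (ht.image F) ?_
  rintro d hd
  obtain ⟨a, ha, rfl⟩ := h d hd
  exact ⟨a, ha, rfl⟩

theorem disN_set_finite {V W : Type} [Fintype V] (P : Set (List V)) (wP : V → V → ℝ)
    (wS : W → W → ℝ) (φ : V → W) (n : ℕ) :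
    {d : ℝ | ∃ e ∈ P, e.length = n + 1 ∧ Reg (e.map φ) ∧
      d = |len wS (e.map φ) - len wP e|}.Finite := by
  refine finite_of_image (List.finite_length_eq V (n+1))
    (fun e => |len wS (e.map φ) - len wP e|) ?_
  rintro d ⟨e, _, hlen, _, rfl⟩
  exact ⟨e, hlen, rfl⟩

theorem disN_nonneg {V W : Type} (P : Set (List V)) (wP : V → V → ℝ) (wS : W → W → ℝ)
    (φ : V → W) (n : ℕ) : 0 ≤ disN P wP wS φ n :=
  sSup_insert0_nonneg _

theorem abs_le_disN {V W : Type} [Fintype V] {P : Set (List V)} {wP : V → V → ℝ}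
    {wS : W → W → ℝ} {φ : V → W} {n : ℕ} {e : List V} (he : e ∈ P) (hlen : e.length = n + 1)
    (hreg : Reg (e.map φ)) :
    |len wS (e.map φ) - len wP e| ≤ disN P wP wS φ n :=
  le_sSup_insert0 (disN_set_finite P wP wS φ n) ⟨e, he, hlen, hreg, rfl⟩

theorem codP_set_finite {V W : Type} [Fintype V] (S : Set (List W)) (wS : W → W → ℝ)
    (φ ψ : V → W) :
    ({d : ℝ | ∃ x : V, [φ x, ψ x] ∈ S ∧ d = wS (φ x) (ψ x)} ∪
     {d : ℝ | ∃ x : V, [ψ x, φ x] ∈ S ∧ d = wS (ψ x) (φ x)}).Finite := by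
  refine Set.Finite.union ?_ ?_
  · refine finite_of_image (Set.finite_univ (α := V)) (fun x => wS (φ x) (ψ x)) ?_
    rintro d ⟨x, _, rfl⟩; exact ⟨x, trivial, rfl⟩
  · refine finite_of_image (Set.finite_univ (α := V)) (fun x => wS (ψ x) (φ x)) ?_
    rintro d ⟨x, _, rfl⟩; exact ⟨x, trivial, rfl⟩

theorem codP_nonneg {V W : Type} (S : Set (List W)) (wS : W → W → ℝ) (φ ψ : V → W) :
    0 ≤ codP S wS φ ψ := sSup_insert0_nonneg _

theorem le_codP {V W : Type} [Fintype V] {S : Set (List W)} {wS : W → W → ℝ}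
    {φ ψ : V → W} {x : V} (h : [φ x, ψ x] ∈ S) : wS (φ x) (ψ x) ≤ codP S wS φ ψ :=
  le_sSup_insert0 (codP_set_finite S wS φ ψ) (Or.inl ⟨x, h, rfl⟩)

theorem codP_comm {V W : Type} (S : Set (List W)) (wS : W → W → ℝ) (φ ψ : V → W) :
    codP S wS φ ψ = codP S wS ψ φ := by
  rw [codP, codP, Set.union_comm]

-- the fundamental A_n mapping lemma
theorem find_mem_Asub {V W : Type} {P : Set (List V)} {S : Set (List W)}
    {wP : V → V → ℝ} {wS : W → W → ℝ} {f : V → W} {n : ℕ} {δ η' : ℝ}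
    (hwm : IsWeakMor P S f)
    (hb : ∀ e ∈ P, e.length = n + 1 → Reg e → Reg (e.map f) →
      len wS (e.map f) ≤ len wP e + η')
    {z : List V →₀ K} (hz : z ∈ Asub K (subPC P wP δ) n) :
    find K f z ∈ Asub K (subPC S wS (δ + η')) n := by
  rw [find_apply]
  refine finsuppSum_mem' z _ _ fun l hl => ?_
  have hlm := (Finsupp.mem_supported K z).1 hz hl
  obtain ⟨⟨hP, hor⟩, hlen, hreg⟩ := hlm
  split
  · rename_i hrm
    refine Submodule.smul_mem _ _ (Finsupp.single_mem_supported K 1 ?_)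
    refine ⟨⟨?_, ?_⟩, by simpa using hlen, hrm⟩
    · rcases hwm l hP with h | h
      · exact h
      · exact absurd hrm h
    · rcases hor with h1 | h2
      · exact Or.inl (by simpa using h1)
      · exact Or.inr (le_trans (hb l hP hlen hreg hrm) (by linarith))
  · rw [smul_zero]; exact Submodule.zero_mem _

-- length of an image of a prism
theorem len_image_prism {V W : Type} (wS : W → W → ℝ) (f g : V → W) (l : List V) (k : ℕ)
    (hk : k < l.length) :
    len wS ((l.take (k+1)).map f ++ (l.drop k).map g)
      = len wS ((l.take (k+1)).map f) + wS (f (l[k]'hk)) (g (l[k]'hk))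
        + len wS ((l.drop k).map g) := by
  have e1 : (l.take (k+1)).map f = (l.take k).map f ++ [f (l[k]'hk)] := by
    rw [List.take_succ, List.map_append]
    simp [List.getElem?_eq_getElem hk]
  have e2 : (l.drop k).map g = g (l[k]'hk) :: (l.drop (k+1)).map g := by
    rw [List.drop_eq_getElem_cons hk]
    rfl
  rw [e1, e2, List.append_assoc, List.singleton_append,
    len_append_cons wS ((l.take k).map f) (f (l[k]'hk)) (g (l[k]'hk) :: (l.drop (k+1)).map g),
    len_cons₂, ← e1, ← e2]
  ring

theorem prism_image_decomp {V W : Type} {F : V ⊕ V → W} {f g : V → W}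
    (hFl : ∀ v, F (Sum.inl v) = f v) (hFr : ∀ v, F (Sum.inr v) = g v) (l : List V) (k : ℕ) :
    (prismL l k).map F = (l.take (k+1)).map f ++ (l.drop k).map g := by
  have h1 : F ∘ Sum.inl = f := funext hFl
  have h2 : F ∘ Sum.inr = g := funext hFr
  simp [prismL, List.map_map, h1, h2]

theorem mem_Omega_iff {V : Type} {P : Set (List V)} {n : ℕ} {z : List V →₀ K} :
    z ∈ OmegaSub K P n ↔ z ∈ Asub K P n ∧ dReg K V z ∈ Asub K P (n - 1) := by
  simp [OmegaSub, Submodule.mem_inf, Submodule.mem_comap]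

theorem mem_Zsub_iff {V : Type} {P : Set (List V)} {n : ℕ} {z : List V →₀ K} :
    z ∈ Zsub K P n ↔ (z ∈ Asub K P n ∧ dReg K V z ∈ Asub K P (n - 1)) ∧ dReg K V z = 0 := by
  simp [Zsub, mem_Omega_iff, Submodule.mem_inf, LinearMap.mem_ker, OmegaSub,
    Submodule.mem_comap]

theorem mem_Bsub_iff {V : Type} {P : Set (List V)} {n : ℕ} {z : List V →₀ K} :
    z ∈ Bsub K P n ↔ ∃ ω, ω ∈ OmegaSub K P (n + 1) ∧ dReg K V ω = z := by
  rw [Bsub, Submodule.mem_map]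

-- ================= the homotopy step lemma =================
theorem step_lemma {V : Type} [Fintype V] {P : Set (List V)}
    (hPinf : ∀ q l : List V, l ∈ P → q <:+: l → q ≠ [] → q ∈ P)
    {wP : V → V → ℝ} {p : ℕ} {f g : V → V} {F : V ⊕ V → V}
    (hF : IsWeakMor (cylSet P) P F)
    (hFl : ∀ v, F (Sum.inl v) = f v) (hFr : ∀ v, F (Sum.inr v) = g v)
    (hfm : IsWeakMor P P f) (hgm : IsWeakMor P P g)
    {η2 : ℝ}
    (hd : ∀ k, k ≤ p → disN P wP wP f k + disN P wP wP g (p - k) + codP P wP f g ≤ η2)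
    (hdf : disN P wP wP f p ≤ η2) (hdg : disN P wP wP g p ≤ η2)
    {δ : ℝ} (hδ : 0 ≤ δ) {z : List V →₀ K} (hz : z ∈ Zsub K (subPC P wP δ) p) :
    find K F (craw K V z) ∈ OmegaSub K (subPC P wP (δ + η2)) (p + 1) ∧
      dReg K V (find K F (craw K V z)) = find K g z - find K f z := by
  obtain ⟨⟨hA, _⟩, hker⟩ := mem_Zsub_iff.1 hz
  have heq : dReg K V (find K F (craw K V z)) = find K g z - find K f z := by
    rw [homotopy_step, hker, map_zero, map_zero, sub_zero,
      (funext hFr : F ∘ Sum.inr = g), (funext hFl : F ∘ Sum.inl = f)]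
  refine ⟨mem_Omega_iff.2 ⟨?_, ?_⟩, heq⟩
  · -- A_{p+1} membership
    rw [find_craw_apply]
    refine finsuppSum_mem' z _ _ fun l hl => ?_
    obtain ⟨⟨hP, hor⟩, hlen, hreg⟩ := (Finsupp.mem_supported K z).1 hA hl
    refine Submodule.smul_mem _ _ (Submodule.sum_mem _ fun k hk => Submodule.smul_mem _ _ ?_)
    have hk' : k < l.length := Finset.mem_range.1 hk
    have hkp : k ≤ p := by omega
    split
    · rename_i hri
      have hcyl : prismL l k ∈ cylSet P := Or.inr (Or.inr ⟨l, hP, k, hk', rfl⟩)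
      have himem : (prismL l k).map F ∈ P := by
        rcases hF _ hcyl with h | h
        · exact h
        · exact absurd hri h
      have himg := prism_image_decomp hFl hFr l k
      refine Finsupp.single_mem_supported K 1 ⟨⟨himem, Or.inr ?_⟩, ?_, hri⟩
      · -- length bound
        have hri' : Reg ((l.take (k+1)).map f ++ (l.drop k).map g) := by
          rw [← himg]; exact hri
        have hrf : Reg ((l.take (k+1)).map f) :=
          List.IsChain.prefix hri' (List.prefix_append _ _)
        have hrg : Reg ((l.drop k).map g) :=
          List.IsChain.suffix hri' (List.suffix_append _ _)
        have hlt : (l.take (k+1)).length = k + 1 := by rw [List.length_take]; omega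
        have hld : (l.drop k).length = (p - k) + 1 := by rw [List.length_drop]; omega
        have htake : l.take (k+1) ∈ P := by
          refine hPinf _ l hP (List.take_prefix _ _).isInfix ?_
          intro hc; rw [hc] at hlt; simp at hlt
        have hdrop : l.drop k ∈ P := by
          refine hPinf _ l hP (List.drop_suffix _ _).isInfix ?_
          intro hc; rw [hc] at hld; simp at hld
        have habs1 := abs_le_disN (wP := wP) (wS := wP) htake hlt hrf
        have habs2 := abs_le_disN (wP := wP) (wS := wP) hdrop hld hrg
        have e1 : (l.take (k+1)).map f = (l.take k).map f ++ [f (l[k]'hk')] := by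
          rw [List.take_succ, List.map_append]
          simp [List.getElem?_eq_getElem hk']
        have e2 : (l.drop k).map g = g (l[k]'hk') :: (l.drop (k+1)).map g := by
          rw [List.drop_eq_getElem_cons hk']
          rfl
        have hedge : [f (l[k]'hk'), g (l[k]'hk')] ∈ P := by
          refine hPinf _ _ himem ?_ (by simp)
          refine ⟨(l.take k).map f, (l.drop (k+1)).map g, ?_⟩
          rw [himg, e1, e2]
          simp
        have hcod : wP (f (l[k]'hk')) (g (l[k]'hk')) ≤ codP P wP f g := le_codP hedge
        have hsum : len wP (l.take (k+1)) + len wP (l.drop k) = len wP l :=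
          len_take_drop wP k l hk'
        have hlenl : len wP l ≤ δ := len_le_of_subPC hδ ⟨hP, hor⟩
        have hdec := len_image_prism wP f g l k hk'
        have hb1 := (abs_le.1 habs1).2
        have hb2 := (abs_le.1 habs2).2
        have hdk := hd k hkp
        rw [himg, hdec]
        rw [abs_sub_le_iff] at habs1 habs2
        linarith [habs1.1, habs2.1]
      · rw [List.length_map, prismL_length hk', hlen]
    · exact Submodule.zero_mem _
  · -- comap part
    rw [heq]
    have hb : ∀ (h : V → V), IsWeakMor P P h → disN P wP wP h p ≤ η2 →
        find K h z ∈ Asub K (subPC P wP (δ + η2)) p := by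
      intro h hwm hdis
      refine find_mem_Asub hwm ?_ hA
      intro e he hl hr hrm
      rcases Nat.eq_zero_or_pos p with hp | hp
      · subst hp
        rw [len_of_length_one wP hl, len_of_length_one wP (by simp [hl])]
        have := disN_nonneg P wP wP h 0
        linarith
      · have := abs_le_disN (wP := wP) (wS := wP) he hl hrm
        rw [abs_sub_le_iff] at this
        linarith [this.1]
    exact Submodule.sub_mem _ (hb g hgm hdg) (hb f hfm hdf)

-- ================= one side of the interleaving homotopy =================
theorem side_lemma {V : Type} [Fintype V] {P : Set (List V)}
    (hPinf : ∀ q l : List V, l ∈ P → q <:+: l → q ≠ [] → q ∈ P)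
    {wP : V → V → ℝ} {p m : ℕ} {f : ℕ → V → V}
    (hfwm : ∀ k, k ≤ m → IsWeakMor P P (f k))
    (hfstep : ∀ k, 1 ≤ k → k ≤ m → WOneStep P P (f (k - 1)) (f k))
    (hfm : f m = id)
    {η2 : ℝ}
    (hd : ∀ k, 1 ≤ k → k ≤ m → ∀ j, j ≤ p →
      disN P wP wP (f (k-1)) j + disN P wP wP (f k) (p - j) + codP P wP (f (k-1)) (f k) ≤ η2)
    {δ : ℝ} (hδ : 0 ≤ δ) {z : List V →₀ K} (hz : z ∈ Zsub K (subPC P wP δ) p) :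
    find K (f 0) z - z ∈ Bsub K (subPC P wP (δ + η2)) p := by
  have key : ∀ i, i < m → ∃ ω, ω ∈ OmegaSub K (subPC P wP (δ + η2)) (p+1) ∧
      dReg K V ω = find K (f (i+1)) z - find K (f i) z := by
    intro i him
    obtain ⟨F, hFw, hor⟩ := hfstep (i+1) (by omega) (by omega)
    simp only [Nat.add_sub_cancel] at hor
    have hdi := hd (i+1) (by omega) (by omega)
    simp only [Nat.add_sub_cancel] at hdi
    have hd0 : ∀ j, 0 ≤ disN P wP wP (f j) 0 := fun j => disN_nonneg _ _ _ _ _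
    have hcod0 : 0 ≤ codP P wP (f i) (f (i+1)) := codP_nonneg _ _ _ _
    have hdf : disN P wP wP (f i) p ≤ η2 := by
      have := hdi p le_rfl
      simp only [Nat.sub_self] at this
      linarith [hd0 (i+1)]
    have hdg : disN P wP wP (f (i+1)) p ≤ η2 := by
      have := hdi 0 (by omega)
      simp only [Nat.sub_zero] at this
      linarith [hd0 i]
    rcases hor with ⟨hl, hr⟩ | ⟨hl, hr⟩
    · obtain ⟨hmem, heq⟩ := step_lemma hPinf hFw hl hr (hfwm i (by omega))
        (hfwm (i+1) (by omega)) hdi hdf hdg hδ hz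
      exact ⟨_, hmem, heq⟩
    · have hdi' : ∀ j, j ≤ p → disN P wP wP (f (i+1)) j + disN P wP wP (f i) (p - j)
          + codP P wP (f (i+1)) (f i) ≤ η2 := by
        intro j hj
        have := hdi (p - j) (by omega)
        rw [Nat.sub_sub_self hj] at this
        rw [codP_comm]
        linarith
      obtain ⟨hmem, heq⟩ := step_lemma hPinf hFw hl hr (hfwm (i+1) (by omega))
        (hfwm i (by omega)) hdi' hdg hdf hδ hz
      refine ⟨-(find K F (craw K V z)), Submodule.neg_mem _ hmem, ?_⟩
      rw [map_neg, heq]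
      abel
  choose! ω hω1 hω2 using key
  have hΩ : (∑ i ∈ Finset.range m, ω i) ∈ OmegaSub K (subPC P wP (δ + η2)) (p+1) :=
    Submodule.sum_mem _ fun i hi => hω1 i (Finset.mem_range.1 hi)
  have hdΩ : dReg K V (∑ i ∈ Finset.range m, ω i) = find K (f m) z - find K (f 0) z := by
    rw [map_sum, Finset.sum_congr rfl (fun i hi => hω2 i (Finset.mem_range.1 hi)),
      Finset.sum_range_sub (fun i => find K (f i) z)]
  have hfz : find K (f m) z = z := by
    rw [hfm, find_id_eq_pr]
    exact pr_of_regular fun l hl =>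
      ((Finsupp.mem_supported K z).1 (mem_Zsub_iff.1 hz).1.1 hl).2.2
  refine mem_Bsub_iff.2 ⟨-(∑ i ∈ Finset.range m, ω i), Submodule.neg_mem _ hΩ, ?_⟩
  rw [map_neg, hdΩ, hfz]
  abel

theorem genPC_infix {V : Type} {A : Set (List V)} :
    ∀ q l : List V, l ∈ (genPC A).carrier → q <:+: l → q ≠ [] → q ∈ (genPC A).carrier := by
  rintro q l ⟨hne, pth, hpth, hinf⟩ hq hqne
  exact ⟨hqne, pth, hpth, hq.trans hinf⟩
end PH

theorem statement18 (K : Type) [Field K] (V W : Type) [Fintype V] [Fintype W]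
    (P : PH.PathComplex V) (S : PH.PathComplex W)
    (h0P : ∀ v : V, [v] ∈ P.carrier) (h0S : ∀ w : W, [w] ∈ S.carrier)
    (wP : V → V → ℝ) (wS : W → W → ℝ)
    (hwP : ∀ a b : V, [a, b] ∈ P.carrier → 0 < wP a b)
    (hwS : ∀ a b : W, [a, b] ∈ S.carrier → 0 < wS a b)
    (p : ℕ)
    -- P̄ = Δ(P_p ∪ P_{p+1}) and S̄ = Δ(S_p ∪ S_{p+1})
    (Pbar : PH.PathComplex V) (Sbar : PH.PathComplex W)
    (hPbar : Pbar = PH.genPC {l | l ∈ P.carrier ∧ (l.length = p + 1 ∨ l.length = p + 2)})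
    (hSbar : Sbar = PH.genPC {l | l ∈ S.carrier ∧ (l.length = p + 1 ∨ l.length = p + 2)})
    (φ : V → W) (ψ : W → V)
    (hφ : PH.IsWeakMor Pbar.carrier Sbar.carrier φ)
    (hψ : PH.IsWeakMor Sbar.carrier Pbar.carrier ψ)
    (m : ℕ) (f : ℕ → V → V) (g : ℕ → W → W)
    (hf0 : f 0 = ψ ∘ φ) (hfm : f m = id)
    (hfwm : ∀ k : ℕ, k ≤ m → PH.IsWeakMor Pbar.carrier Pbar.carrier (f k))
    (hfstep : ∀ k : ℕ, 1 ≤ k → k ≤ m →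
        PH.WOneStep Pbar.carrier Pbar.carrier (f (k - 1)) (f k))
    (hg0 : g 0 = φ ∘ ψ) (hgm : g m = id)
    (hgwm : ∀ k : ℕ, k ≤ m → PH.IsWeakMor Sbar.carrier Sbar.carrier (g k))
    (hgstep : ∀ k : ℕ, 1 ≤ k → k ≤ m →
        PH.WOneStep Sbar.carrier Sbar.carrier (g (k - 1)) (g k))
    (η : ℝ)
    (hη : η = max
      (sSup (insert 0 {d : ℝ | ∃ i : ℕ, 1 ≤ i ∧ i ≤ p + 1 ∧
          d = PH.disN Pbar.carrier wP wS φ i}))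
      (max
      (sSup (insert 0 {d : ℝ | ∃ i : ℕ, 1 ≤ i ∧ i ≤ p + 1 ∧
          d = PH.disN Sbar.carrier wS wP ψ i}))
      (max
      ((1 / 2) * sSup (insert 0 {d : ℝ | ∃ k : ℕ, 1 ≤ k ∧ k ≤ m ∧
          d = sSup (insert 0 {d' : ℝ | ∃ l : ℕ, l ≤ p ∧
                d' = PH.disN Pbar.carrier wP wP (f (k - 1)) l +
                     PH.disN Pbar.carrier wP wP (f k) (p - l)}) +
              PH.codP Pbar.carrier wP (f (k - 1)) (f k)}))
      ((1 / 2) * sSup (insert 0 {d : ℝ | ∃ k : ℕ, 1 ≤ k ∧ k ≤ m ∧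
          d = sSup (insert 0 {d' : ℝ | ∃ l : ℕ, l ≤ p ∧
                d' = PH.disN Sbar.carrier wS wS (g (k - 1)) l +
                     PH.disN Sbar.carrier wS wS (g k) (p - l)}) +
              PH.codP Sbar.carrier wS (g (k - 1)) (g k)}))))) :
    -- the p-th persistence modules of P̄ and S̄ are η-interleaved via φ and ψ
    (∀ δ : ℝ, 0 ≤ δ →
      (∀ z : List V →₀ K, z ∈ PH.Zsub K (PH.subPC Pbar.carrier wP δ) p →
          PH.find K φ z ∈ PH.Zsub K (PH.subPC Sbar.carrier wS (δ + η)) p) ∧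
      (∀ z : List V →₀ K, z ∈ PH.Bsub K (PH.subPC Pbar.carrier wP δ) p →
          PH.find K φ z ∈ PH.Bsub K (PH.subPC Sbar.carrier wS (δ + η)) p) ∧
      (∀ z : List W →₀ K, z ∈ PH.Zsub K (PH.subPC Sbar.carrier wS δ) p →
          PH.find K ψ z ∈ PH.Zsub K (PH.subPC Pbar.carrier wP (δ + η)) p) ∧
      (∀ z : List W →₀ K, z ∈ PH.Bsub K (PH.subPC Sbar.carrier wS δ) p →
          PH.find K ψ z ∈ PH.Bsub K (PH.subPC Pbar.carrier wP (δ + η)) p)) ∧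
    -- the structure maps are induced by the inclusions
    (∀ δ δ' : ℝ, 0 ≤ δ → δ ≤ δ' →
      PH.Zsub K (PH.subPC Pbar.carrier wP δ) p ≤
        PH.Zsub K (PH.subPC Pbar.carrier wP δ') p ∧
      PH.Bsub K (PH.subPC Pbar.carrier wP δ) p ≤
        PH.Bsub K (PH.subPC Pbar.carrier wP δ') p ∧
      PH.Zsub K (PH.subPC Sbar.carrier wS δ) p ≤
        PH.Zsub K (PH.subPC Sbar.carrier wS δ') p ∧
      PH.Bsub K (PH.subPC Sbar.carrier wS δ) p ≤
        PH.Bsub K (PH.subPC Sbar.carrier wS δ') p) ∧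
    -- the composites equal the structure maps δ ≤ δ+2η on homology
    (∀ δ : ℝ, 0 ≤ δ →
      (∀ z : List V →₀ K, z ∈ PH.Zsub K (PH.subPC Pbar.carrier wP δ) p →
          PH.find K ψ (PH.find K φ z) - z ∈
            PH.Bsub K (PH.subPC Pbar.carrier wP (δ + 2 * η)) p) ∧
      (∀ z : List W →₀ K, z ∈ PH.Zsub K (PH.subPC Sbar.carrier wS δ) p →
          PH.find K φ (PH.find K ψ z) - z ∈
            PH.Bsub K (PH.subPC Sbar.carrier wS (δ + 2 * η)) p)) := by
  have hPinf : ∀ q l : List V, l ∈ Pbar.carrier → q <:+: l → q ≠ [] → q ∈ Pbar.carrier := by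
    rw [hPbar]; exact PH.genPC_infix
  have hSinf : ∀ q l : List W, l ∈ Sbar.carrier → q <:+: l → q ≠ [] → q ∈ Sbar.carrier := by
    rw [hSbar]; exact PH.genPC_infix
  have hηnn : 0 ≤ η := by
    rw [hη]; exact le_trans (PH.sSup_insert0_nonneg _) (le_max_left _ _)
  -- dis bounds for φ and ψ
  have hfin1 : {d : ℝ | ∃ i : ℕ, 1 ≤ i ∧ i ≤ p + 1 ∧
      d = PH.disN Pbar.carrier wP wS φ i}.Finite :=
    PH.finite_of_image (Set.finite_Iic (p+1)) (fun i => PH.disN Pbar.carrier wP wS φ i)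
      (by rintro d ⟨i, h1, h2, rfl⟩; exact ⟨i, Set.mem_Iic.2 h2, rfl⟩)
  have hfin2 : {d : ℝ | ∃ i : ℕ, 1 ≤ i ∧ i ≤ p + 1 ∧
      d = PH.disN Sbar.carrier wS wP ψ i}.Finite :=
    PH.finite_of_image (Set.finite_Iic (p+1)) (fun i => PH.disN Sbar.carrier wS wP ψ i)
      (by rintro d ⟨i, h1, h2, rfl⟩; exact ⟨i, Set.mem_Iic.2 h2, rfl⟩)
  have hφdis : ∀ i, 1 ≤ i → i ≤ p + 1 → PH.disN Pbar.carrier wP wS φ i ≤ η := by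
    intro i h1 h2
    refine le_trans (PH.le_sSup_insert0 hfin1 ⟨i, h1, h2, rfl⟩) ?_
    rw [hη]; exact le_max_left _ _
  have hψdis : ∀ i, 1 ≤ i → i ≤ p + 1 → PH.disN Sbar.carrier wS wP ψ i ≤ η := by
    intro i h1 h2
    refine le_trans (PH.le_sSup_insert0 hfin2 ⟨i, h1, h2, rfl⟩) ?_
    rw [hη]; exact le_trans (le_max_left _ _) (le_max_right _ _)
  -- the homotopy bounds
  have hffin_in : ∀ k : ℕ, {d' : ℝ | ∃ l : ℕ, l ≤ p ∧
      d' = PH.disN Pbar.carrier wP wP (f (k - 1)) l +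
           PH.disN Pbar.carrier wP wP (f k) (p - l)}.Finite := by
    intro k
    refine PH.finite_of_image (Set.finite_Iic p) (fun l => PH.disN Pbar.carrier wP wP (f (k-1)) l +
      PH.disN Pbar.carrier wP wP (f k) (p - l)) ?_
    rintro d ⟨l, h1, rfl⟩; exact ⟨l, Set.mem_Iic.2 h1, rfl⟩
  have hgfin_in : ∀ k : ℕ, {d' : ℝ | ∃ l : ℕ, l ≤ p ∧
      d' = PH.disN Sbar.carrier wS wS (g (k - 1)) l +
           PH.disN Sbar.carrier wS wS (g k) (p - l)}.Finite := by
    intro k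
    refine PH.finite_of_image (Set.finite_Iic p) (fun l => PH.disN Sbar.carrier wS wS (g (k-1)) l +
      PH.disN Sbar.carrier wS wS (g k) (p - l)) ?_
    rintro d ⟨l, h1, rfl⟩; exact ⟨l, Set.mem_Iic.2 h1, rfl⟩
  have hffin_out : {d : ℝ | ∃ k : ℕ, 1 ≤ k ∧ k ≤ m ∧
      d = sSup (insert 0 {d' : ℝ | ∃ l : ℕ, l ≤ p ∧
            d' = PH.disN Pbar.carrier wP wP (f (k - 1)) l +
                 PH.disN Pbar.carrier wP wP (f k) (p - l)}) +
          PH.codP Pbar.carrier wP (f (k - 1)) (f k)}.Finite := by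
    refine PH.finite_of_image (Set.finite_Iic m) (fun k =>
      sSup (insert 0 {d' : ℝ | ∃ l : ℕ, l ≤ p ∧
            d' = PH.disN Pbar.carrier wP wP (f (k - 1)) l +
                 PH.disN Pbar.carrier wP wP (f k) (p - l)}) +
          PH.codP Pbar.carrier wP (f (k - 1)) (f k)) ?_
    rintro d ⟨k, h1, h2, rfl⟩; exact ⟨k, Set.mem_Iic.2 h2, rfl⟩
  have hgfin_out : {d : ℝ | ∃ k : ℕ, 1 ≤ k ∧ k ≤ m ∧
      d = sSup (insert 0 {d' : ℝ | ∃ l : ℕ, l ≤ p ∧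
            d' = PH.disN Sbar.carrier wS wS (g (k - 1)) l +
                 PH.disN Sbar.carrier wS wS (g k) (p - l)}) +
          PH.codP Sbar.carrier wS (g (k - 1)) (g k)}.Finite := by
    refine PH.finite_of_image (Set.finite_Iic m) (fun k =>
      sSup (insert 0 {d' : ℝ | ∃ l : ℕ, l ≤ p ∧
            d' = PH.disN Sbar.carrier wS wS (g (k - 1)) l +
                 PH.disN Sbar.carrier wS wS (g k) (p - l)}) +
          PH.codP Sbar.carrier wS (g (k - 1)) (g k)) ?_
    rintro d ⟨k, h1, h2, rfl⟩; exact ⟨k, Set.mem_Iic.2 h2, rfl⟩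
  have hf2η : ∀ k, 1 ≤ k → k ≤ m → ∀ j, j ≤ p →
      PH.disN Pbar.carrier wP wP (f (k-1)) j + PH.disN Pbar.carrier wP wP (f k) (p - j)
        + PH.codP Pbar.carrier wP (f (k-1)) (f k) ≤ 2 * η := by
    intro k hk1 hk2 j hj
    have h1 := PH.le_sSup_insert0 (hffin_in k) ⟨j, hj, rfl⟩
    have h3 := PH.le_sSup_insert0 hffin_out ⟨k, hk1, hk2, rfl⟩
    have h4 : (1/2 : ℝ) * sSup (insert 0 {d : ℝ | ∃ k : ℕ, 1 ≤ k ∧ k ≤ m ∧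
        d = sSup (insert 0 {d' : ℝ | ∃ l : ℕ, l ≤ p ∧
              d' = PH.disN Pbar.carrier wP wP (f (k - 1)) l +
                   PH.disN Pbar.carrier wP wP (f k) (p - l)}) +
            PH.codP Pbar.carrier wP (f (k - 1)) (f k)}) ≤ η := by
      rw [hη]
      exact le_trans (le_max_left _ _) (le_trans (le_max_right _ _) (le_max_right _ _))
    linarith
  have hg2η : ∀ k, 1 ≤ k → k ≤ m → ∀ j, j ≤ p →
      PH.disN Sbar.carrier wS wS (g (k-1)) j + PH.disN Sbar.carrier wS wS (g k) (p - j)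
        + PH.codP Sbar.carrier wS (g (k-1)) (g k) ≤ 2 * η := by
    intro k hk1 hk2 j hj
    have h1 := PH.le_sSup_insert0 (hgfin_in k) ⟨j, hj, rfl⟩
    have h3 := PH.le_sSup_insert0 hgfin_out ⟨k, hk1, hk2, rfl⟩
    have h4 : (1/2 : ℝ) * sSup (insert 0 {d : ℝ | ∃ k : ℕ, 1 ≤ k ∧ k ≤ m ∧
        d = sSup (insert 0 {d' : ℝ | ∃ l : ℕ, l ≤ p ∧
              d' = PH.disN Sbar.carrier wS wS (g (k - 1)) l +
                   PH.disN Sbar.carrier wS wS (g k) (p - l)}) +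
            PH.codP Sbar.carrier wS (g (k - 1)) (g k)}) ≤ η := by
      rw [hη]
      exact le_trans (le_max_right _ _) (le_trans (le_max_right _ _) (le_max_right _ _))
    linarith
  -- pointwise length bounds for the induced maps
  have hbφ : ∀ n, n ≤ p + 1 → ∀ e, e ∈ Pbar.carrier → e.length = n + 1 → PH.Reg e →
      PH.Reg (e.map φ) → PH.len wS (e.map φ) ≤ PH.len wP e + η := by
    intro n hn e he hl hr hrm
    rcases Nat.eq_zero_or_pos n with h0 | h1
    · subst h0
      rw [PH.len_of_length_one wP hl, PH.len_of_length_one wS (by simp [hl])]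
      linarith
    · have h2 := PH.abs_le_disN (wP := wP) (wS := wS) he hl hrm
      rw [abs_sub_le_iff] at h2
      have h3 := hφdis n h1 hn
      linarith [h2.1]
  have hbψ : ∀ n, n ≤ p + 1 → ∀ e, e ∈ Sbar.carrier → e.length = n + 1 → PH.Reg e →
      PH.Reg (e.map ψ) → PH.len wP (e.map ψ) ≤ PH.len wS e + η := by
    intro n hn e he hl hr hrm
    rcases Nat.eq_zero_or_pos n with h0 | h1
    · subst h0
      rw [PH.len_of_length_one wS hl, PH.len_of_length_one wP (by simp [hl])]
      linarith
    · have h2 := PH.abs_le_disN (wP := wS) (wS := wP) he hl hrm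
      rw [abs_sub_le_iff] at h2
      have h3 := hψdis n h1 hn
      linarith [h2.1]
  refine ⟨?_, ?_, ?_⟩
  · -- part 1 : the interleaving maps
    intro δ hδ
    refine ⟨?_, ?_, ?_, ?_⟩
    · intro z hz
      obtain ⟨⟨hA, hC⟩, hk⟩ := PH.mem_Zsub_iff.1 hz
      refine PH.mem_Zsub_iff.2 ⟨⟨PH.find_mem_Asub hφ (hbφ p (by omega)) hA, ?_⟩, ?_⟩
      · rw [PH.dReg_find, hk, map_zero]; exact Submodule.zero_mem _
      · rw [PH.dReg_find, hk, map_zero]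
    · intro z hz
      obtain ⟨ω, hω, rfl⟩ := PH.mem_Bsub_iff.1 hz
      obtain ⟨hωA, hωC⟩ := PH.mem_Omega_iff.1 hω
      rw [← PH.dReg_find]
      refine PH.mem_Bsub_iff.2 ⟨PH.find K φ ω, PH.mem_Omega_iff.2
        ⟨PH.find_mem_Asub hφ (hbφ (p+1) le_rfl) hωA, ?_⟩, rfl⟩
      rw [PH.dReg_find]
      exact PH.find_mem_Asub hφ (hbφ p (by omega)) hωC
    · intro z hz
      obtain ⟨⟨hA, hC⟩, hk⟩ := PH.mem_Zsub_iff.1 hz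
      refine PH.mem_Zsub_iff.2 ⟨⟨PH.find_mem_Asub hψ (hbψ p (by omega)) hA, ?_⟩, ?_⟩
      · rw [PH.dReg_find, hk, map_zero]; exact Submodule.zero_mem _
      · rw [PH.dReg_find, hk, map_zero]
    · intro z hz
      obtain ⟨ω, hω, rfl⟩ := PH.mem_Bsub_iff.1 hz
      obtain ⟨hωA, hωC⟩ := PH.mem_Omega_iff.1 hω
      rw [← PH.dReg_find]
      refine PH.mem_Bsub_iff.2 ⟨PH.find K ψ ω, PH.mem_Omega_iff.2
        ⟨PH.find_mem_Asub hψ (hbψ (p+1) le_rfl) hωA, ?_⟩, rfl⟩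
      rw [PH.dReg_find]
      exact PH.find_mem_Asub hψ (hbψ p (by omega)) hωC
  · -- part 2 : structure maps
    intro δ δ' h0 hle
    have hP' := PH.subPC_mono Pbar.carrier wP hle
    have hS' := PH.subPC_mono Sbar.carrier wS hle
    exact ⟨PH.Zsub_mono hP' p, PH.Bsub_mono hP' p, PH.Zsub_mono hS' p, PH.Bsub_mono hS' p⟩
  · -- part 3 : homotopies
    intro δ hδ
    constructor
    · intro z hz
      have h1 : PH.find K ψ (PH.find K φ z) = PH.find K (f 0) z := by
        rw [PH.find_find, ← hf0]
      rw [h1]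
      exact PH.side_lemma hPinf hfwm hfstep hfm hf2η hδ hz
    · intro z hz
      have h1 : PH.find K φ (PH.find K ψ z) = PH.find K (g 0) z := by
        rw [PH.find_find, ← hg0]
      rw [h1]
      exact PH.side_lemma hSinf hgwm hgstep hgm hg2η hδ hz
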